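/- Let G be a topological group, Γ ⊆ G a dense subgroup, and γ ∈ Γ. If the conjugacy class of γ in Γ is finite, then the closure of the Γ-conjugacy class of γ equals the G-conjugacy class of γ, and this G-conjugacy class is finite. -/

import Mathlib

/-- Let `Γ` be a dense subgroup of a Hausdorff topological group `G` and `γ ∈ Γ`. If the
conjugacy class of `γ` in `Γ` is finite, then the closure of the `Γ`-conjugacy class of `γ`
equals the `G`-conjugacy class of `γ`, and the latter is finite. -/
theorem closure_conjClass_of_dense_finite
    {G : Type*} [Group G] [TopologicalSpace G] [IsTopologicalGroup G] [T2Space G]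
    (Γ : Subgroup G) (hdense : Dense (Γ : Set G)) (γ : G) (hγ : γ ∈ Γ)
    (hfin : {x : G | ∃ h ∈ Γ, h * γ * h⁻¹ = x}.Finite) :
    closure {x : G | ∃ h ∈ Γ, h * γ * h⁻¹ = x} = {x : G | ∃ g : G, g * γ * g⁻¹ = x} ∧
      {x : G | ∃ g : G, g * γ * g⁻¹ = x}.Finite := by
  set S := {x : G | ∃ h ∈ Γ, h * γ * h⁻¹ = x} with hS
  set T := {x : G | ∃ g : G, g * γ * g⁻¹ = x} with hT
  have hf : Continuous fun g : G => g * γ * g⁻¹ := by continuity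
  have hclosed : IsClosed S := hfin.isClosed
  have hST : S = T := by
    apply Set.Subset.antisymm
    · rintro x ⟨h, _, rfl⟩; exact ⟨h, rfl⟩
    · rintro x ⟨g, rfl⟩
      have hmem : g * γ * g⁻¹ ∈ closure S := by
        refine map_mem_closure (f := fun g : G => g * γ * g⁻¹) hf (hdense g) ?_
        rintro h hh
        exact ⟨h, hh, rfl⟩
      rwa [hclosed.closure_eq] at hmem
  refine ⟨?_, hST ▸ hfin⟩
  rw [hclosed.closure_eq, hST]
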